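/- Let K be a field, ℓ a prime, and v a valuation of K with valuation ring O_v, maximal ideal m_v, residue field k(v) and value group Γ_v. Assume Γ_v has no nontrivial ℓ-divisible convex subgroup. Let T be a subgroup of K^× with 𝔘_v^1 ⊆ T ⊆ 𝔘_v, and let T_v be the image of T ∩ O_v^× under the residue map O_v^× → k(v)^×. Then: (a) T is rigid (as a subgroup of K^×) if and only if T_v is rigid (as a subgroup of k(v)^×); and (b) T is valuative if and only if T_v is valuative. -/

import Mathlib

set_option synthInstance.maxHeartbeats 1000000
set_option maxHeartbeats 1000000


/-- A subgroup `T ≤ F^×` is rigid if for every `x ∈ F^× \ T` the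
subgroup of `F^×/T` generated by the images of `x` and `1 - x` is cyclic. -/
def IsRigid {F : Type*} [Field F] (T : Subgroup Fˣ) : Prop :=
  ∀ x : Fˣ, x ∉ T → ∀ h : (1 : F) - (x : F) ≠ 0,
    IsCyclic ↥(Subgroup.closure {(QuotientGroup.mk x : Fˣ ⧸ T),
      QuotientGroup.mk (Units.mk0 ((1 : F) - (x : F)) h)})

/-- A subgroup `H ≤ F^×` is valuative if it contains the unit group of a valuation
subring of `F`. -/
def IsValuative {F : Type*} [Field F] (H : Subgroup Fˣ) : Prop :=
  ∃ O : ValuationSubring F, O.unitGroup ≤ H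

/-- The subgroup `F^{×ℓ}` of `ℓ`-th powers of `F^×`. -/
def powSub (F : Type*) [Field F] (ℓ : ℕ) : Subgroup Fˣ :=
  MonoidHom.range (powMonoidHom ℓ : Fˣ →* Fˣ)

/-- `Γ_v = K^×/O_v^×` has no nontrivial `ℓ`-divisible convex subgroup: encoded via
subgroups `D` of `K^×` containing `O_v^×` (which correspond to the subgroups of `Γ_v`),
convexity and `ℓ`-divisibility being stated through the valuation. -/
def NoLDivConvex {K : Type*} [Field K] (ℓ : ℕ) (O : ValuationSubring K) : Prop :=
  ∀ D : Subgroup Kˣ, O.unitGroup ≤ D →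
    (∀ x ∈ D, ∀ y : Kˣ, 1 ≤ O.valuation (y : K) →
      O.valuation (y : K) ≤ O.valuation (x : K) → y ∈ D) →
    (∀ x ∈ D, ∃ z ∈ D, z ^ ℓ / x ∈ O.unitGroup) →
    D = O.unitGroup

/-- The subgroup `𝔘_v = O_v^× · K^{×ℓ}` of `K^×`. -/
noncomputable def Uv {K : Type*} [Field K] (ℓ : ℕ) (O : ValuationSubring K) : Subgroup Kˣ :=
  O.unitGroup ⊔ powSub K ℓ

/-- The subgroup `𝔘_v^1 = ⟨1 + m_v, -1, K^{×ℓ}⟩` of `K^×`. -/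
def U1v {K : Type*} [Field K] (ℓ : ℕ) (O : ValuationSubring K) : Subgroup Kˣ :=
  Subgroup.closure {u : Kˣ | ∃ a : K, O.valuation a < 1 ∧ (u : K) = 1 + a} ⊔
    Subgroup.closure {(-1 : Kˣ)} ⊔ powSub K ℓ

/-- The image `T_v` of `T ∩ O_v^×` in `k(v)^×` under the residue map. -/
noncomputable def Tv {K : Type*} [Field K] (O : ValuationSubring K) (T : Subgroup Kˣ) :
    Subgroup (IsLocalRing.ResidueField O)ˣ :=
  Subgroup.map O.unitGroupToResidueFieldUnits ((T ⊓ O.unitGroup).subgroupOf O.unitGroup)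

section Helpers

variable {K : Type*} [Field K] {ℓ : ℕ} {O : ValuationSubring K} {T : Subgroup Kˣ}

lemma mem_T_of_one_add (hT1 : U1v ℓ O ≤ T) {u : Kˣ} {a : K}
    (ha : O.valuation a < 1) (hu : (u : K) = 1 + a) : u ∈ T :=
  hT1 (Subgroup.mem_sup_left (Subgroup.mem_sup_left (Subgroup.subset_closure ⟨a, ha, hu⟩)))

lemma neg_one_mem_T (hT1 : U1v ℓ O ≤ T) : (-1 : Kˣ) ∈ T :=
  hT1 (Subgroup.mem_sup_left (Subgroup.mem_sup_right (Subgroup.subset_closure rfl)))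

lemma pow_mem_T (hT1 : U1v ℓ O ≤ T) (s : Kˣ) : s ^ ℓ ∈ T :=
  hT1 (Subgroup.mem_sup_right ⟨s, rfl⟩)

lemma mem_T_of_principal (hT1 : U1v ℓ O ≤ T) {u : Kˣ}
    (h : u ∈ O.principalUnitGroup) : u ∈ T :=
  mem_T_of_one_add hT1 ((O.mem_principalUnitGroup_iff u).mp h) (by ring)

lemma resU_mem_Tv {u : O.unitGroup} (h : (u : Kˣ) ∈ T) :
    O.unitGroupToResidueFieldUnits u ∈ Tv O T :=
  ⟨u, Subgroup.mem_subgroupOf.mpr ⟨h, u.2⟩, rfl⟩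

lemma mem_T_of_resU (hT1 : U1v ℓ O ≤ T) {u : O.unitGroup}
    (h : O.unitGroupToResidueFieldUnits u ∈ Tv O T) : (u : Kˣ) ∈ T := by
  obtain ⟨t, ht, htu⟩ := h
  have ht' : (t : Kˣ) ∈ T := (Subgroup.mem_subgroupOf.mp ht).1
  have h1 : O.unitGroupToResidueFieldUnits (u * t⁻¹) = 1 := by
    rw [map_mul, map_inv, htu, mul_inv_cancel]
  have hker : (u * t⁻¹ : O.unitGroup) ∈ O.unitGroupToResidueFieldUnits.ker := h1
  rw [ValuationSubring.ker_unitGroupToResidueFieldUnits] at hker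
  have h2 : ((u * t⁻¹ : O.unitGroup) : Kˣ) ∈ O.principalUnitGroup := hker
  have h3 := mem_T_of_principal hT1 h2
  have h4 : (u : Kˣ) = ((u * t⁻¹ : O.unitGroup) : Kˣ) * (t : Kˣ) := by
    push_cast; group
  rw [h4]; exact T.mul_mem h3 ht'

lemma ker_subgroupMap' {G H : Type*} [Group G] [Group H] (f : G →* H) (N : Subgroup G) :
    (f.subgroupMap N).ker = f.ker.subgroupOf N := by
  ext x
  have hx : ((f.subgroupMap N) x : H) = f x := rfl
  simp only [MonoidHom.mem_ker, Subgroup.mem_subgroupOf, Subtype.ext_iff, hx,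
    OneMemClass.coe_one]

lemma isCyclic_map_transfer {G H H' : Type*} [Group G] [Group H] [Group H']
    (f : G →* H) (g : G →* H') (hker : f.ker = g.ker) (N : Subgroup G)
    (hc : IsCyclic (N.map f)) : IsCyclic (N.map g) := by
  haveI := hc
  have e1 : N ⧸ (f.subgroupMap N).ker ≃* N.map f :=
    QuotientGroup.quotientKerEquivOfSurjective _ (f.subgroupMap_surjective N)
  have e2 : N ⧸ (g.subgroupMap N).ker ≃* N.map g :=
    QuotientGroup.quotientKerEquivOfSurjective _ (g.subgroupMap_surjective N)
  have hkk : (f.subgroupMap N).ker = (g.subgroupMap N).ker := by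
    rw [ker_subgroupMap', ker_subgroupMap', hker]
  haveI h5 : IsCyclic (N ⧸ (f.subgroupMap N).ker) :=
    isCyclic_of_surjective e1.symm e1.symm.surjective
  haveI h6 : IsCyclic (N ⧸ (g.subgroupMap N).ker) :=
    isCyclic_of_surjective (QuotientGroup.quotientMulEquivOfEq hkk)
      (QuotientGroup.quotientMulEquivOfEq hkk).surjective
  exact isCyclic_of_surjective e2 e2.surjective

lemma isCyclic_closure_pair {G : Type*} [Group G] {a b : G} (h : b ∈ Subgroup.zpowers a) :
    IsCyclic (Subgroup.closure {a, b}) := by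
  haveI : IsCyclic (Subgroup.zpowers a) := by
    refine ⟨⟨⟨a, Subgroup.mem_zpowers a⟩, fun x => ?_⟩⟩
    obtain ⟨n, hn⟩ := Subgroup.mem_zpowers_iff.mp x.2
    exact Subgroup.mem_zpowers_iff.mpr ⟨n, Subtype.ext (by simpa using hn)⟩
  refine Subgroup.isCyclic_of_le (H' := Subgroup.zpowers a) ?_
  rw [Subgroup.closure_le]
  intro x hx
  rcases hx with h1 | h1
  · rw [h1]; exact Subgroup.mem_zpowers a
  · rw [Set.mem_singleton_iff] at h1; rw [h1]; exact h

lemma ker_fg (hT1 : U1v ℓ O ≤ T) :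
    ((QuotientGroup.mk' T).comp O.unitGroup.subtype).ker =
    ((QuotientGroup.mk' (Tv O T)).comp O.unitGroupToResidueFieldUnits).ker := by
  ext u
  simp only [MonoidHom.mem_ker, MonoidHom.comp_apply, QuotientGroup.mk'_apply,
    QuotientGroup.eq_one_iff, Subgroup.coe_subtype]
  exact ⟨resU_mem_Tv, mem_T_of_resU hT1⟩

end Helpers

section PartA

variable {K : Type*} [Field K] {ℓ : ℕ} {O : ValuationSubring K} {T : Subgroup Kˣ}

lemma resU_eq_one_iff {u : O.unitGroup} :
    O.unitGroupToResidueFieldUnits u = 1 ↔ (u : Kˣ) ∈ O.principalUnitGroup := by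
  rw [← MonoidHom.mem_ker, ValuationSubring.ker_unitGroupToResidueFieldUnits]
  rfl

lemma resU_one_sub {u w : O.unitGroup} (h : ((w : Kˣ) : K) = 1 - ((u : Kˣ) : K)) :
    (O.unitGroupToResidueFieldUnits w : IsLocalRing.ResidueField O)
      = 1 - (O.unitGroupToResidueFieldUnits u : IsLocalRing.ResidueField O) := by
  rw [ValuationSubring.coe_unitGroupToResidueFieldUnits_apply,
      ValuationSubring.coe_unitGroupToResidueFieldUnits_apply]
  have h2 : (O.unitGroupMulEquiv w : O) = 1 - (O.unitGroupMulEquiv u : O) := by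
    apply Subtype.ext
    push_cast
    simpa using h
  rw [h2, RingHom.map_sub, RingHom.map_one]
  rfl

lemma one_sub_mem_unitGroup {x : Kˣ} (hx : x ∈ O.unitGroup) (hp : x ∉ O.principalUnitGroup)
    (h : (1 : K) - (x : K) ≠ 0) : Units.mk0 ((1 : K) - (x : K)) h ∈ O.unitGroup := by
  rw [ValuationSubring.mem_unitGroup_iff, Units.val_mk0]
  have hx' : O.valuation (x : K) = 1 := hx
  have hle : O.valuation ((1 : K) - (x : K)) ≤ 1 := by
    refine le_trans (O.valuation.map_sub _ _) ?_
    rw [map_one, hx']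
    simp
  rcases lt_or_eq_of_le hle with hlt | heq
  · exfalso
    apply hp
    rw [ValuationSubring.mem_principalUnitGroup_iff]
    rwa [O.valuation.map_sub_swap] at hlt
  · exact heq

lemma rigid_iff (hT1 : U1v ℓ O ≤ T) : IsRigid T ↔ IsRigid (Tv O T) := by
  have hfg := ker_fg (ℓ := ℓ) (O := O) (T := T) hT1
  set f : O.unitGroup →* Kˣ ⧸ T := (QuotientGroup.mk' T).comp O.unitGroup.subtype with hf
  set g : O.unitGroup →* (IsLocalRing.ResidueField O)ˣ ⧸ Tv O T :=
    (QuotientGroup.mk' (Tv O T)).comp O.unitGroupToResidueFieldUnits with hg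
  constructor
  · intro hr ξ hξ hξ1
    obtain ⟨u, hu⟩ := O.surjective_unitGroupToResidueFieldUnits ξ
    have hxT : (u : Kˣ) ∉ T := fun h => hξ (hu ▸ resU_mem_Tv h)
    have hξne1 : ξ ≠ 1 := by
      intro h; apply hξ1; rw [h]; simp
    have hup : (u : Kˣ) ∉ O.principalUnitGroup := fun hp =>
      hξne1 (hu ▸ resU_eq_one_iff.mpr hp)
    have hx1 : (1 : K) - ((u : Kˣ) : K) ≠ 0 := by
      intro h0
      apply hup
      rw [ValuationSubring.mem_principalUnitGroup_iff]
      have h0' : ((u : Kˣ) : K) - 1 = 0 := by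
        rw [sub_eq_zero] at h0 ⊢; exact h0.symm
      rw [h0', map_zero]
      exact zero_lt_one
    set y : Kˣ := Units.mk0 _ hx1 with hy
    have hyu : y ∈ O.unitGroup := one_sub_mem_unitGroup u.2 hup hx1
    set uy : O.unitGroup := ⟨y, hyu⟩ with huy
    have hcyc := hr (u : Kˣ) hxT hx1
    set N := Subgroup.closure ({u, uy} : Set O.unitGroup) with hN
    have hmapf : N.map f = Subgroup.closure
        {((QuotientGroup.mk (u : Kˣ)) : Kˣ ⧸ T), QuotientGroup.mk y} := by
      rw [hN, MonoidHom.map_closure, Set.image_pair]; rfl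
    have hcf : IsCyclic (N.map f) := by rw [hmapf]; exact hcyc
    have hcg : IsCyclic (N.map g) := isCyclic_map_transfer f g hfg N hcf
    have h2 : O.unitGroupToResidueFieldUnits uy =
        Units.mk0 ((1 : IsLocalRing.ResidueField O) - (ξ : IsLocalRing.ResidueField O)) hξ1 := by
      apply Units.ext
      rw [Units.val_mk0, ← hu]
      exact resU_one_sub rfl
    have hmapg : N.map g = Subgroup.closure
        {((QuotientGroup.mk ξ) : (IsLocalRing.ResidueField O)ˣ ⧸ Tv O T),
          QuotientGroup.mk (Units.mk0 ((1 : IsLocalRing.ResidueField O) - ξ) hξ1)} := by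
      rw [hN, MonoidHom.map_closure, Set.image_pair]
      have e1 : g u = QuotientGroup.mk ξ := by
        rw [hg]; simp only [MonoidHom.comp_apply, QuotientGroup.mk'_apply, hu]
      have e2 : g uy = QuotientGroup.mk
          (Units.mk0 ((1 : IsLocalRing.ResidueField O) - ξ) hξ1) := by
        rw [hg]; simp only [MonoidHom.comp_apply, QuotientGroup.mk'_apply, h2]
      rw [e1, e2]
    rw [hmapg] at hcg
    exact hcg
  · intro hr x hxT hx1
    set y : Kˣ := Units.mk0 _ hx1 with hy
    rcases lt_trichotomy (O.valuation (x : K)) 1 with hv | hv | hv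
    · -- v x < 1 : 1 - x ∈ 1 + m ⊆ T
      have hyT : y ∈ T := by
        refine mem_T_of_one_add hT1 (a := -(x : K)) ?_ ?_
        · rwa [O.valuation.map_neg]
        · rw [hy, Units.val_mk0, sub_eq_add_neg]
      refine isCyclic_closure_pair ?_
      have : (QuotientGroup.mk y : Kˣ ⧸ T) = 1 := (QuotientGroup.eq_one_iff y).mpr hyT
      rw [this]
      exact Subgroup.one_mem _
    · -- v x = 1
      have hxu : x ∈ O.unitGroup := hv
      set u : O.unitGroup := ⟨x, hxu⟩ with hudef
      have hup : x ∉ O.principalUnitGroup := fun hp => hxT (mem_T_of_principal hT1 hp)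
      set ξ := O.unitGroupToResidueFieldUnits u with hξdef
      have hξ : ξ ∉ Tv O T := fun h => hxT (mem_T_of_resU hT1 h)
      have hξ1 : (1 : IsLocalRing.ResidueField O) - (ξ : IsLocalRing.ResidueField O) ≠ 0 := by
        intro h0
        apply hup
        rw [← resU_eq_one_iff (u := u)]
        apply Units.ext
        rw [sub_eq_zero] at h0
        rw [Units.val_one]
        exact h0.symm
      have hcycv := hr ξ hξ hξ1
      have hyu : y ∈ O.unitGroup := one_sub_mem_unitGroup hxu hup hx1
      set uy : O.unitGroup := ⟨y, hyu⟩ with huy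
      set N := Subgroup.closure ({u, uy} : Set O.unitGroup) with hN
      have h2 : O.unitGroupToResidueFieldUnits uy =
          Units.mk0 ((1 : IsLocalRing.ResidueField O) - (ξ : IsLocalRing.ResidueField O)) hξ1 := by
        apply Units.ext
        rw [Units.val_mk0]
        exact resU_one_sub rfl
      have hmapg : N.map g = Subgroup.closure
          {((QuotientGroup.mk ξ) : (IsLocalRing.ResidueField O)ˣ ⧸ Tv O T),
            QuotientGroup.mk (Units.mk0 ((1 : IsLocalRing.ResidueField O) - ξ) hξ1)} := by
        rw [hN, MonoidHom.map_closure, Set.image_pair]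
        have e2 : g uy = QuotientGroup.mk
            (Units.mk0 ((1 : IsLocalRing.ResidueField O) - ξ) hξ1) := by
          rw [hg]; simp only [MonoidHom.comp_apply, QuotientGroup.mk'_apply, h2]
        have e1 : g u = QuotientGroup.mk ξ := rfl
        rw [e1, e2]
      have hcg : IsCyclic (N.map g) := by rw [hmapg]; exact hcycv
      have hcf : IsCyclic (N.map f) := isCyclic_map_transfer g f hfg.symm N hcg
      have hmapf : N.map f = Subgroup.closure
          {((QuotientGroup.mk x) : Kˣ ⧸ T), QuotientGroup.mk y} := by
        rw [hN, MonoidHom.map_closure, Set.image_pair]; rfl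
      rw [hmapf] at hcf
      exact hcf
    · -- v x > 1
      have hxne0 : (x : K) ≠ 0 := x.ne_zero
      have hvinv : O.valuation ((x : K)⁻¹) < 1 := by
        rw [map_inv₀]
        exact inv_lt_one₀ (lt_trans zero_lt_one hv) |>.mpr hv
      have h' : (1 : K) - (x : K)⁻¹ ≠ 0 := by
        intro h0
        rw [sub_eq_zero, eq_comm, inv_eq_one] at h0
        rw [h0, map_one] at hv
        exact lt_irrefl _ hv
      set w : Kˣ := Units.mk0 _ h' with hw
      have hwT : w ∈ T := by
        refine mem_T_of_one_add hT1 (a := -((x : K)⁻¹)) ?_ ?_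
        · rwa [O.valuation.map_neg]
        · rw [hw, Units.val_mk0, sub_eq_add_neg]
      have hyeq : y = (-1) * x * w := by
        apply Units.ext
        simp only [hy, hw, Units.val_mul, Units.val_neg, Units.val_one, Units.val_mk0]
        have := mul_inv_cancel₀ hxne0
        linear_combination -this
      have hmky : (QuotientGroup.mk y : Kˣ ⧸ T) = QuotientGroup.mk x := by
        rw [QuotientGroup.eq]
        have h9 : y⁻¹ * x = ((-1 : Kˣ) * w)⁻¹ := by
          apply Units.ext
          rw [hyeq]
          push_cast
          field_simp
        rw [h9]
        exact T.inv_mem (T.mul_mem (neg_one_mem_T hT1) hwT)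
      refine isCyclic_closure_pair ?_
      rw [hmky]
      exact Subgroup.mem_zpowers _
  
end PartA

section PartB

variable {K : Type*} [Field K] {ℓ : ℕ} {O : ValuationSubring K} {T : Subgroup Kˣ}

lemma unit_val_pos (x : Kˣ) : 0 < O.valuation (x : K) :=
  O.valuation.pos_iff.mpr x.ne_zero

lemma unit_coe_inv (x : Kˣ) : ((x⁻¹ : Kˣ) : K) = ((x : K))⁻¹ := by
  rw [← Units.val_inv_eq_inv_val]

lemma valuative_of_Tv (hT1 : U1v ℓ O ≤ T)
    (Ob : ValuationSubring (IsLocalRing.ResidueField O)) (hOb : Ob.unitGroup ≤ Tv O T) :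
    IsValuative T := by
  classical
  set S : Subring K := (Ob.toSubring.comap (IsLocalRing.residue O)).map O.subtype with hS
  have hmem : ∀ x : K, x ∈ S ↔ ∃ y : O, IsLocalRing.residue O y ∈ Ob ∧ (y : K) = x := by
    intro x
    constructor
    · rintro ⟨y, hy, rfl⟩
      exact ⟨y, Subring.mem_comap.mp hy, rfl⟩
    · rintro ⟨y, hy, rfl⟩
      exact ⟨y, Subring.mem_comap.mpr hy, rfl⟩
  have hprop : ∀ x : K, x ∈ S ∨ x⁻¹ ∈ S := by
    intro x
    by_cases hx : x ∈ O
    · by_cases hr : IsLocalRing.residue O ⟨x, hx⟩ ∈ Ob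
      · exact Or.inl ((hmem x).mpr ⟨⟨x, hx⟩, hr, rfl⟩)
      · -- residue not in Ob, hence nonzero, x is a unit of O
        have hr0 : IsLocalRing.residue O ⟨x, hx⟩ ≠ 0 := by
          intro h0; exact hr (h0 ▸ Ob.zero_mem)
        have hrinv : (IsLocalRing.residue O ⟨x, hx⟩)⁻¹ ∈ Ob :=
          (Ob.mem_or_inv_mem _).resolve_left hr
        have hx0 : x ≠ 0 := by
          intro h0
          apply hr0
          have : (⟨x, hx⟩ : O) = 0 := Subtype.ext h0
          rw [this, map_zero]
        have hnm : ¬ O.valuation x < 1 := by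
          intro hlt
          apply hr0
          rw [IsLocalRing.residue_eq_zero_iff]
          exact (O.valuation_lt_one_iff ⟨x, hx⟩).mpr hlt
        have hv1 : O.valuation x = 1 :=
          le_antisymm ((O.valuation_le_one_iff x).mpr hx) (not_lt.mp hnm)
        have hxinv : x⁻¹ ∈ O := by
          rw [← O.valuation_le_one_iff, map_inv₀, hv1, inv_one]
        have hmul : (⟨x, hx⟩ : O) * ⟨x⁻¹, hxinv⟩ = 1 := by
          apply Subtype.ext
          push_cast
          exact mul_inv_cancel₀ hx0
        have hresinv : IsLocalRing.residue O ⟨x⁻¹, hxinv⟩ =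
            (IsLocalRing.residue O ⟨x, hx⟩)⁻¹ := by
          apply eq_inv_of_mul_eq_one_right
          rw [← map_mul, hmul, map_one]
        exact Or.inr ((hmem x⁻¹).mpr ⟨⟨x⁻¹, hxinv⟩, by rw [hresinv]; exact hrinv, rfl⟩)
    · -- x ∉ O: x⁻¹ ∈ maximal ideal, residue 0
      have hx0 : x ≠ 0 := by intro h0; exact hx (h0 ▸ O.zero_mem)
      have hv : 1 < O.valuation x := by
        by_contra hle
        exact hx ((O.valuation_le_one_iff x).mp (not_lt.mp hle))
      have hxinv : x⁻¹ ∈ O := by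
        rw [← O.valuation_le_one_iff, map_inv₀]
        exact le_of_lt ((inv_lt_one₀ (lt_trans zero_lt_one hv)).mpr hv)
      have hres0 : IsLocalRing.residue O ⟨x⁻¹, hxinv⟩ = 0 := by
        rw [IsLocalRing.residue_eq_zero_iff]
        rw [O.valuation_lt_one_iff]
        show O.valuation x⁻¹ < 1
        rw [map_inv₀]
        exact (inv_lt_one₀ (lt_trans zero_lt_one hv)).mpr hv
      exact Or.inr ((hmem x⁻¹).mpr ⟨⟨x⁻¹, hxinv⟩, by rw [hres0]; exact Ob.zero_mem, rfl⟩)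
  set O' : ValuationSubring K := ValuationSubring.ofSubring S hprop with hO'
  refine ⟨O', ?_⟩
  intro u hu
  have huS : (u : K) ∈ S := by
    rw [← ValuationSubring.mem_ofSubring S hprop, ← hO', ← O'.valuation_le_one_iff]
    exact le_of_eq hu
  have huS' : ((u : K))⁻¹ ∈ S := by
    rw [← ValuationSubring.mem_ofSubring S hprop, ← hO', ← O'.valuation_le_one_iff, map_inv₀]
    rw [ValuationSubring.mem_unitGroup_iff] at hu
    rw [hu, inv_one]
  obtain ⟨a, haOb, haK⟩ := (hmem _).mp huS
  obtain ⟨b, hbOb, hbK⟩ := (hmem _).mp huS'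
  have hab : a * b = 1 := by
    apply Subtype.ext
    push_cast
    rw [haK, hbK]
    exact mul_inv_cancel₀ u.ne_zero
  have hmulres : IsLocalRing.residue O a * IsLocalRing.residue O b = 1 := by
    rw [← map_mul, hab, map_one]
  -- a is a unit of O
  have hvaK : O.valuation (u : K) = 1 := by
    have h1 : O.valuation (u : K) ≤ 1 := by
      rw [← haK]; exact (O.valuation_le_one_iff _).mpr a.2
    have h2 : O.valuation ((u : K))⁻¹ ≤ 1 := by
      rw [← hbK]; exact (O.valuation_le_one_iff _).mpr b.2
    refine le_antisymm h1 ?_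
    have h3 : O.valuation (u : K) * O.valuation ((u : K))⁻¹ = 1 := by
      rw [← map_mul, mul_inv_cancel₀ u.ne_zero, map_one]
    calc (1 : O.ValueGroup) = O.valuation (u : K) * O.valuation ((u : K))⁻¹ := h3.symm
      _ ≤ O.valuation (u : K) * 1 := mul_le_mul_right h2 _
      _ = O.valuation (u : K) := mul_one _
  have huO : u ∈ O.unitGroup := hvaK
  set U : O.unitGroup := ⟨u, huO⟩ with hU
  -- the residue unit
  have hvres : Ob.valuation (IsLocalRing.residue O a) = 1 := by
    have h1 : Ob.valuation (IsLocalRing.residue O a) ≤ 1 :=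
      (Ob.valuation_le_one_iff _).mpr haOb
    have h2 : Ob.valuation (IsLocalRing.residue O b) ≤ 1 :=
      (Ob.valuation_le_one_iff _).mpr hbOb
    refine le_antisymm h1 ?_
    have h3 : Ob.valuation (IsLocalRing.residue O a) * Ob.valuation (IsLocalRing.residue O b)
        = 1 := by rw [← map_mul, hmulres, map_one]
    calc (1 : Ob.ValueGroup) = _ * _ := h3.symm
      _ ≤ Ob.valuation (IsLocalRing.residue O a) * 1 := mul_le_mul_right h2 _
      _ = Ob.valuation (IsLocalRing.residue O a) := mul_one _
  set ξ : (IsLocalRing.ResidueField O)ˣ :=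
    Units.mkOfMulEqOne _ _ hmulres with hξ
  have hξOb : ξ ∈ Ob.unitGroup := by
    rw [ValuationSubring.mem_unitGroup_iff]
    exact hvres
  have hresU : O.unitGroupToResidueFieldUnits U = ξ := by
    apply Units.ext
    rw [ValuationSubring.coe_unitGroupToResidueFieldUnits_apply]
    have : (O.unitGroupMulEquiv U : O) = a := by
      apply Subtype.ext
      rw [ValuationSubring.coe_unitGroupMulEquiv_apply]
      exact haK.symm
    rw [this]
    rfl
  have : O.unitGroupToResidueFieldUnits U ∈ Tv O T := by
    rw [hresU]; exact hOb hξOb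
  exact mem_T_of_resU hT1 this

end PartB

section PartB2

variable {K : Type*} [Field K] {ℓ : ℕ} {O : ValuationSubring K} {T : Subgroup Kˣ}

/-- If `x` is in the maximal ideal of `O'` and `v(x) ≥ 1`, then some element of `T`
has the same `O`-value as `x`. -/
lemma exists_T_val_of_mprime {O' : ValuationSubring K}
    (hO' : O'.unitGroup ≤ T) {x : Kˣ} (hx' : O'.valuation (x : K) < 1)
    (hx1 : 1 ≤ O.valuation (x : K)) :
    ∃ t : Kˣ, t ∈ T ∧ O.valuation (t : K) = O.valuation (x : K) := by
  rcases eq_or_lt_of_le hx1 with heq | hlt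
  · exact ⟨1, T.one_mem, by rw [Units.val_one, map_one, ← heq]⟩
  · have hne : (1 : K) - (x : K) ≠ 0 := by
      intro h0; rw [sub_eq_zero] at h0
      rw [← h0, map_one] at hx'; exact lt_irrefl _ hx'
    refine ⟨Units.mk0 _ hne, ?_, ?_⟩
    · apply hO'
      rw [ValuationSubring.mem_unitGroup_iff, Units.val_mk0]
      exact O'.valuation.map_one_sub_of_lt hx'
    · rw [Units.val_mk0]
      exact O.valuation.map_sub_eq_of_lt_right (by rwa [map_one])

lemma exists_T_val_aux {O' : ValuationSubring K}
    (hO' : O'.unitGroup ≤ T) {x u : Kˣ} (hu : u ∈ O'.unitGroup)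
    (hxu : O.valuation (x : K) ≤ O.valuation (u : K)) (h1x : 1 ≤ O.valuation (x : K)) :
    ∃ t : Kˣ, t ∈ T ∧ O.valuation (t : K) = O.valuation (x : K) := by
  rcases lt_trichotomy (O'.valuation (x : K)) 1 with hv | hv | hv
  · exact exists_T_val_of_mprime hO' hv h1x
  · exact ⟨x, hO' hv, rfl⟩
  · set z : Kˣ := u * x⁻¹ with hz
    have hzK : ((z : Kˣ) : K) = (u : K) * ((x : K))⁻¹ := by
      rw [hz]; push_cast; rfl
    have hz' : O'.valuation (z : K) < 1 := by
      rw [hzK, map_mul, map_inv₀]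
      have hu1 : O'.valuation (u : K) = 1 := hu
      rw [hu1, one_mul]
      exact (inv_lt_one₀ (O'.valuation.pos_iff.mpr x.ne_zero)).mpr hv
    have hz1 : 1 ≤ O.valuation (z : K) := by
      rw [hzK, map_mul, map_inv₀, ← div_eq_mul_inv]
      exact (one_le_div₀ (unit_val_pos x)).mpr hxu
    obtain ⟨t₁, ht₁T, ht₁⟩ := exists_T_val_of_mprime hO' hz' hz1
    refine ⟨u * t₁⁻¹, T.mul_mem (hO' hu) (T.inv_mem ht₁T), ?_⟩
    have hcoe : ((u * t₁⁻¹ : Kˣ) : K) = (u : K) * ((t₁ : K))⁻¹ := by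
      push_cast; rfl
    rw [hcoe, map_mul, map_inv₀, ht₁, hzK, map_mul, map_inv₀]
    have hxne : O.valuation (x : K) ≠ 0 := (unit_val_pos x).ne'
    have hune : O.valuation (u : K) ≠ 0 := (unit_val_pos u).ne'
    rw [mul_inv_rev, inv_inv, ← mul_assoc,
      mul_comm (O.valuation (u : K)) (O.valuation (x : K)), mul_assoc,
      mul_inv_cancel₀ hune, mul_one]

lemma exists_T_val {O' : ValuationSubring K}
    (hO' : O'.unitGroup ≤ T) {x u : Kˣ} (hu : u ∈ O'.unitGroup)
    (hl : (O.valuation (u : K))⁻¹ ≤ O.valuation (x : K))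
    (hr : O.valuation (x : K) ≤ O.valuation (u : K)) :
    ∃ t : Kˣ, t ∈ T ∧ O.valuation (t : K) = O.valuation (x : K) := by
  rcases le_total 1 (O.valuation (x : K)) with h1 | h1
  · exact exists_T_val_aux hO' hu hr h1
  · have hxinvv : O.valuation ((x⁻¹ : Kˣ) : K) = (O.valuation (x : K))⁻¹ := by
      rw [unit_coe_inv, map_inv₀]
    have h1' : 1 ≤ O.valuation ((x⁻¹ : Kˣ) : K) := by
      rw [hxinvv]
      exact (one_le_inv₀ (unit_val_pos x)).mpr h1
    have hr' : O.valuation ((x⁻¹ : Kˣ) : K) ≤ O.valuation (u : K) := by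
      rw [hxinvv]
      have := (inv_le_inv₀ (unit_val_pos x) (inv_pos.mpr (unit_val_pos u))).mpr hl
      rwa [inv_inv] at this
    obtain ⟨t, htT, ht⟩ := exists_T_val_aux hO' hu hr' h1'
    refine ⟨t⁻¹, T.inv_mem htT, ?_⟩
    rw [unit_coe_inv, map_inv₀, ht, hxinvv, inv_inv]

end PartB2

section PartB3

variable {K : Type*} [Field K] {ℓ : ℕ} {O : ValuationSubring K} {T : Subgroup Kˣ}

lemma maximal_ideal_subset {O' : ValuationSubring K} (hle : O' ≤ O) {c : K}
    (hc : O.valuation c < 1) : O'.valuation c < 1 := by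
  by_cases hc0 : c = 0
  · rw [hc0, map_zero]; exact zero_lt_one
  · by_contra h
    have h1 : 1 ≤ O'.valuation c := not_lt.mp h
    have h2 : O'.valuation c⁻¹ ≤ 1 := by
      rw [map_inv₀]
      exact inv_le_one₀ (O'.valuation.pos_iff.mpr hc0) |>.mpr h1
    have h3 : c⁻¹ ∈ O := hle ((O'.valuation_le_one_iff _).mp h2)
    have h4 : O.valuation c⁻¹ ≤ 1 := (O.valuation_le_one_iff _).mpr h3
    rw [map_inv₀] at h4
    have h5 : 1 ≤ O.valuation c :=
      (inv_le_one₀ (O.valuation.pos_iff.mpr hc0)).mp h4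
    exact absurd hc (not_lt.mpr h5)

lemma valuative_to_Tv (hℓ : ℓ.Prime) (hconv : NoLDivConvex ℓ O)
    (hT2 : T ≤ Uv ℓ O) {O' : ValuationSubring K} (hO' : O'.unitGroup ≤ T) :
    IsValuative (Tv O T) := by
  classical
  -- the convex hull of the value group of O'-units, as a subgroup of Kˣ
  set D : Subgroup Kˣ :=
    { carrier := {x : Kˣ | ∃ u : Kˣ, u ∈ O'.unitGroup ∧
        (O.valuation (u : K))⁻¹ ≤ O.valuation (x : K) ∧
        O.valuation (x : K) ≤ O.valuation (u : K)}
      one_mem' := ⟨1, O'.unitGroup.one_mem, by simp⟩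
      mul_mem' := by
        rintro a b ⟨u, hu, hul, hur⟩ ⟨w, hw, hwl, hwr⟩
        refine ⟨u * w, O'.unitGroup.mul_mem hu hw, ?_, ?_⟩
        · have e1 : ((u * w : Kˣ) : K) = (u : K) * (w : K) := by push_cast; rfl
          have e2 : ((a * b : Kˣ) : K) = (a : K) * (b : K) := by push_cast; rfl
          rw [e1, e2, map_mul, map_mul, mul_inv]
          exact mul_le_mul' hul hwl
        · have e1 : ((u * w : Kˣ) : K) = (u : K) * (w : K) := by push_cast; rfl
          have e2 : ((a * b : Kˣ) : K) = (a : K) * (b : K) := by push_cast; rfl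
          rw [e1, e2, map_mul, map_mul]
          exact mul_le_mul' hur hwr
      inv_mem' := by
        rintro a ⟨u, hu, hul, hur⟩
        refine ⟨u, hu, ?_, ?_⟩
        · rw [unit_coe_inv, map_inv₀]
          exact (inv_le_inv₀ (unit_val_pos u) (unit_val_pos a)).mpr hur
        · rw [unit_coe_inv, map_inv₀]
          have := (inv_le_inv₀ (unit_val_pos a) (inv_pos.mpr (unit_val_pos u))).mpr hul
          rwa [inv_inv] at this } with hD
  have hu1of : ∀ u : Kˣ, u ∈ O'.unitGroup →
      ∀ x : Kˣ, (O.valuation (u : K))⁻¹ ≤ O.valuation (x : K) →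
      O.valuation (x : K) ≤ O.valuation (u : K) → 1 ≤ O.valuation (u : K) := by
    intro u hu x hl hr
    by_contra hlt
    have h2 : 1 < (O.valuation (u : K))⁻¹ :=
      (one_lt_inv₀ (unit_val_pos u)).mpr (not_le.mp hlt)
    exact absurd (hl.trans hr) (not_le.mpr (lt_trans (not_le.mp hlt) h2))
  have hDunits : O.unitGroup ≤ D := by
    intro x hx
    have hx1 : O.valuation (x : K) = 1 := hx
    exact ⟨1, O'.unitGroup.one_mem, by rw [Units.val_one, map_one, inv_one, hx1], by
      rw [Units.val_one, map_one, hx1]⟩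
  have hDconv : ∀ x ∈ D, ∀ y : Kˣ, 1 ≤ O.valuation (y : K) →
      O.valuation (y : K) ≤ O.valuation (x : K) → y ∈ D := by
    rintro x ⟨u, hu, hl, hr⟩ y h1 h2
    have hu1 : 1 ≤ O.valuation (u : K) := hu1of u hu x hl hr
    exact ⟨u, hu, le_trans (inv_le_one₀ (unit_val_pos u) |>.mpr hu1) h1,
      le_trans h2 hr⟩
  have hDdiv : ∀ x ∈ D, ∃ z ∈ D, z ^ ℓ / x ∈ O.unitGroup := by
    rintro x ⟨u, hu, hl, hr⟩
    have hu1 : 1 ≤ O.valuation (u : K) := hu1of u hu x hl hr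
    obtain ⟨t, htT, htv⟩ := exists_T_val (O := O) hO' hu hl hr
    obtain ⟨w, hw, p, hp, hwp⟩ := Subgroup.mem_sup.mp (hT2 htT)
    obtain ⟨s, hs⟩ := hp
    have hps : p = s ^ ℓ := hs.symm
    have hvx : O.valuation (x : K) = (O.valuation (s : K)) ^ ℓ := by
      have e1 : ((w * s ^ ℓ : Kˣ) : K) = (w : K) * ((s : K)) ^ ℓ := by push_cast; rfl
      have hw1 : O.valuation (w : K) = 1 := hw
      rw [← htv, ← hwp, hps, e1, map_mul, hw1, one_mul, map_pow]
    refine ⟨s, ?_, ?_⟩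
    · rcases le_total 1 (O.valuation (s : K)) with h | h
      · refine ⟨u, hu, le_trans (inv_le_one₀ (unit_val_pos u) |>.mpr hu1) h, ?_⟩
        have : O.valuation (s : K) ≤ (O.valuation (s : K)) ^ ℓ := by
          calc O.valuation (s : K) = (O.valuation (s : K)) ^ 1 := (pow_one _).symm
            _ ≤ (O.valuation (s : K)) ^ ℓ := pow_le_pow_right' h hℓ.one_lt.le
        exact this.trans (hvx ▸ hr)
      · refine ⟨u, hu, ?_, le_trans h hu1⟩
        have : (O.valuation (s : K)) ^ ℓ ≤ O.valuation (s : K) := by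
          calc (O.valuation (s : K)) ^ ℓ ≤ (O.valuation (s : K)) ^ 1 :=
              pow_le_pow_right_of_le_one' h hℓ.one_lt.le
            _ = O.valuation (s : K) := pow_one _
        exact le_trans hl (hvx ▸ this)
    · rw [ValuationSubring.mem_unitGroup_iff]
      have e1 : ((s ^ ℓ / x : Kˣ) : K) = ((s : K)) ^ ℓ / (x : K) := by push_cast; rfl
      rw [e1, map_div₀, map_pow, ← hvx]
      exact div_self (unit_val_pos x).ne'
  have hDeq : D = O.unitGroup := hconv D hDunits hDconv hDdiv
  have hsub : O'.unitGroup ≤ O.unitGroup := by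
    rw [← hDeq]
    intro u hu
    rcases le_total 1 (O.valuation (u : K)) with h | h
    · exact ⟨u, hu, le_trans (inv_le_one₀ (unit_val_pos u) |>.mpr h) h, le_refl _⟩
    · refine ⟨u⁻¹, O'.unitGroup.inv_mem hu, ?_, ?_⟩
      · rw [unit_coe_inv, map_inv₀, inv_inv]
      · rw [unit_coe_inv, map_inv₀]
        exact le_trans h ((one_le_inv₀ (unit_val_pos u)).mpr h)
  have hle : O' ≤ O := ValuationSubring.unitGroup_le_unitGroup.mp hsub
  -- image of O' in the residue field
  set Rb : Subring (IsLocalRing.ResidueField O) :=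
    (O'.toSubring.comap O.subtype).map (IsLocalRing.residue O) with hRb
  have hmem : ∀ r : IsLocalRing.ResidueField O,
      r ∈ Rb ↔ ∃ y : O, (y : K) ∈ O' ∧ IsLocalRing.residue O y = r := by
    intro r
    constructor
    · rintro ⟨y, hy, rfl⟩
      exact ⟨y, Subring.mem_comap.mp hy, rfl⟩
    · rintro ⟨y, hy, rfl⟩
      exact ⟨y, Subring.mem_comap.mpr hy, rfl⟩
  have hprop : ∀ r : IsLocalRing.ResidueField O, r ∈ Rb ∨ r⁻¹ ∈ Rb := by
    intro r
    obtain ⟨y, hy⟩ := IsLocalRing.residue_surjective (R := O) r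
    rcases O'.mem_or_inv_mem (y : K) with h | h
    · exact Or.inl ((hmem r).mpr ⟨y, h, hy⟩)
    · by_cases hr0 : r = 0
      · refine Or.inl ((hmem r).mpr ⟨0, ?_, by rw [map_zero, hr0]⟩)
        show ((0 : O) : K) ∈ O'
        rw [ZeroMemClass.coe_zero]
        exact O'.zero_mem
      · have hy0 : (y : K) ≠ 0 := by
          intro h0
          apply hr0
          rw [← hy]
          have : y = 0 := Subtype.ext h0
          rw [this, map_zero]
        have hnm : ¬ O.valuation (y : K) < 1 := by
          intro hlt
          apply hr0
          rw [← hy, IsLocalRing.residue_eq_zero_iff]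
          exact (O.valuation_lt_one_iff y).mpr hlt
        have hv1 : O.valuation (y : K) = 1 :=
          le_antisymm ((O.valuation_le_one_iff _).mpr y.2) (not_lt.mp hnm)
        have hyi : ((y : K))⁻¹ ∈ O := by
          rw [← O.valuation_le_one_iff, map_inv₀, hv1, inv_one]
        have hmul : y * (⟨((y : K))⁻¹, hyi⟩ : O) = 1 := by
          apply Subtype.ext
          push_cast
          exact mul_inv_cancel₀ hy0
        have hresinv : IsLocalRing.residue O (⟨((y : K))⁻¹, hyi⟩ : O) = r⁻¹ := by
          apply eq_inv_of_mul_eq_one_right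
          rw [← hy, ← map_mul, hmul, map_one]
        exact Or.inr ((hmem _).mpr ⟨⟨((y : K))⁻¹, hyi⟩, h, hresinv⟩)
  refine ⟨ValuationSubring.ofSubring Rb hprop, ?_⟩
  intro ξ hξ
  set Ob := ValuationSubring.ofSubring Rb hprop with hOb
  have hξS : (ξ : IsLocalRing.ResidueField O) ∈ Rb := by
    rw [← ValuationSubring.mem_ofSubring Rb hprop, ← hOb, ← Ob.valuation_le_one_iff]
    exact le_of_eq hξ
  have hξS' : ((ξ : IsLocalRing.ResidueField O))⁻¹ ∈ Rb := by
    rw [← ValuationSubring.mem_ofSubring Rb hprop, ← hOb, ← Ob.valuation_le_one_iff, map_inv₀]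
    rw [ValuationSubring.mem_unitGroup_iff] at hξ
    rw [hξ, inv_one]
  obtain ⟨a, haO', haR⟩ := (hmem _).mp hξS
  obtain ⟨b, hbO', hbR⟩ := (hmem _).mp hξS'
  have hmulres : IsLocalRing.residue O (a * b) = 1 := by
    rw [map_mul, haR, hbR, mul_inv_cancel₀ ξ.ne_zero]
  -- a*b ∈ 1 + m_O, hence a unit of O'
  have hsmall : O.valuation (((a : K)) * (b : K) - 1) < 1 := by
    have : a * b - 1 ∈ IsLocalRing.maximalIdeal O := by
      rw [← IsLocalRing.residue_eq_zero_iff, map_sub, hmulres, map_one, sub_self]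
    have h2 := (O.valuation_lt_one_iff (a * b - 1)).mp this
    have e1 : ((a * b - 1 : O) : K) = ((a : K)) * (b : K) - 1 := by push_cast; rfl
    rwa [e1] at h2
  have hsmall' : O'.valuation (((a : K)) * (b : K) - 1) < 1 :=
    maximal_ideal_subset hle hsmall
  have habv' : O'.valuation (((a : K)) * (b : K)) = 1 := by
    have e1 : ((a : K)) * (b : K) = 1 + (((a : K)) * (b : K) - 1) := by ring
    rw [e1]
    exact O'.valuation.map_one_add_of_lt hsmall'
  have hav' : O'.valuation ((a : K)) = 1 := by
    have h1 : O'.valuation ((a : K)) ≤ 1 := (O'.valuation_le_one_iff _).mpr haO'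
    have h2 : O'.valuation ((b : K)) ≤ 1 := (O'.valuation_le_one_iff _).mpr hbO'
    refine le_antisymm h1 ?_
    calc (1 : O'.ValueGroup) = O'.valuation (((a : K)) * (b : K)) := habv'.symm
      _ = O'.valuation ((a : K)) * O'.valuation ((b : K)) := map_mul _ _ _
      _ ≤ O'.valuation ((a : K)) * 1 := mul_le_mul_right h2 _
      _ = O'.valuation ((a : K)) := mul_one _
  have ha0 : ((a : K)) ≠ 0 := by
    intro h0
    apply ξ.ne_zero
    rw [← haR]
    have : a = 0 := Subtype.ext h0
    rw [this, map_zero]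
  set ahat : Kˣ := Units.mk0 _ ha0 with hahat
  have haT : ahat ∈ T := hO' hav'
  have haO : ahat ∈ O.unitGroup := by
    rw [ValuationSubring.mem_unitGroup_iff, Units.val_mk0]
    refine le_antisymm ((O.valuation_le_one_iff _).mpr a.2) ?_
    by_contra hlt
    apply ξ.ne_zero
    rw [← haR, IsLocalRing.residue_eq_zero_iff]
    exact (O.valuation_lt_one_iff a).mpr (not_le.mp hlt)
  set A : O.unitGroup := ⟨ahat, haO⟩ with hA
  have hresA : O.unitGroupToResidueFieldUnits A = ξ := by
    apply Units.ext
    rw [ValuationSubring.coe_unitGroupToResidueFieldUnits_apply]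
    have : (O.unitGroupMulEquiv A : O) = a := by
      apply Subtype.ext
      rw [ValuationSubring.coe_unitGroupMulEquiv_apply]
      rfl
    rw [this]
    exact haR
  rw [← hresA]
  exact resU_mem_Tv haT

end PartB3

/-- if `Γ_v` has no nontrivial `ℓ`-divisible convex subgroup and
`𝔘_v^1 ≤ T ≤ 𝔘_v`, then `T` is rigid iff `T_v` is rigid, and `T` is valuative iff
`T_v` is valuative. -/
theorem stmt_10 {K : Type*} [Field K] (ℓ : ℕ) (hℓ : ℓ.Prime) (O : ValuationSubring K)
    (hconv : NoLDivConvex ℓ O) (T : Subgroup Kˣ)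
    (hT1 : U1v ℓ O ≤ T) (hT2 : T ≤ Uv ℓ O) :
    (IsRigid T ↔ IsRigid (Tv O T)) ∧ (IsValuative T ↔ IsValuative (Tv O T)) := by
  refine ⟨rigid_iff hT1, ?_⟩
  constructor
  · rintro ⟨O', hO'⟩
    exact valuative_to_Tv hℓ hconv hT2 hO'
  · rintro ⟨Ob, hOb⟩
    exact valuative_of_Tv hT1 Ob hOb
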